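/- Let a₀ ∈ 𝔻, a₁, a₂ ∈ ℝ with a₂ ≠ 0, let φ(z) = a₀ + a₁z/(1 − conj(a₀)·z) map 𝔻 into itself, let ψ(z) = a₂/(1 − conj(a₀)·z), let p ∈ 𝔻 \ {0}, and let λ ∈ ℂ with |λ| = 1 and λp = conj(p). Then the weighted composition operator W_{ψ,φ} on H² is JW_{ξ_p,τ_p}-normal and Hermitian if and only if ((a₁ − |a₀|²)² − 1)·|p|² = −2·(a₁ − |a₀|² + 1)·Re(a₀·p). -/

import Mathlib

open scoped ComplexConjugate InnerProductSpace ENNReal NNReal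
open Complex Metric

noncomputable section

abbrev H2 : Type := lp (fun _ : ℕ => ℂ) 2

namespace H2

/-- Evaluation of an element of `H²` (given by its sequence of Taylor coefficients)
at a point `z` of the unit disk: `f(z) = ∑ aₙ zⁿ`. -/
def eval (f : H2) (z : ℂ) : ℂ := ∑' n : ℕ, (f : ∀ _ : ℕ, ℂ) n * z ^ n

/-- The Szegő kernel function `K_w(z) = 1/(1 - conj w * z)`. -/
def ker (w z : ℂ) : ℂ := (1 - conj w * z)⁻¹

lemma kernel_memℓp (w : ℂ) (hw : ‖w‖ < 1) :
    Memℓp (fun n : ℕ => (conj w) ^ n) 2 := by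
  apply memℓp_gen
  have hsum : Summable (fun n : ℕ => (‖w‖ ^ 2) ^ n) :=
    summable_geometric_of_lt_one (by positivity) (by nlinarith [norm_nonneg w])
  refine hsum.congr fun n => ?_
  have h2 : ((2 : ℝ≥0∞).toReal) = ((2 : ℕ) : ℝ) := by simp
  rw [h2, Real.rpow_natCast]
  simp [norm_pow, ← pow_mul, Nat.mul_comm]

/-- The reproducing kernel of `H²` at `w` in the unit disk, as an element of `H²`. -/
def kernel (w : ℂ) : H2 :=
  if hw : ‖w‖ < 1 then ⟨fun n : ℕ => (conj w) ^ n, kernel_memℓp w hw⟩ else 0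

/-- `T` is the composition operator `C_φ` on `H²`. -/
def IsCompOp (φ : ℂ → ℂ) (T : H2 →L[ℂ] H2) : Prop :=
  ∀ f : H2, ∀ z : ℂ, ‖z‖ < 1 → eval (T f) z = eval f (φ z)

/-- `W` is the weighted composition operator `W_{ψ,φ}` on `H²`. -/
def IsWCompOp (ψ φ : ℂ → ℂ) (W : H2 →L[ℂ] H2) : Prop :=
  ∀ f : H2, ∀ z : ℂ, ‖z‖ < 1 → eval (W f) z = ψ z * eval f (φ z)

/-- A conjugation on `H²`: a conjugate-linear involution satisfying `⟪Cx, Cy⟫ = ⟪y, x⟫`. -/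
structure IsConjugation (C : H2 → H2) : Prop where
  map_add : ∀ x y : H2, C (x + y) = C x + C y
  map_smul : ∀ (c : ℂ) (x : H2), C (c • x) = conj c • C x
  invol : ∀ x : H2, C (C x) = x
  inner_conj : ∀ x y : H2, ⟪C x, C y⟫_ℂ = ⟪y, x⟫_ℂ

/-- `T` is `C`-normal: `C T* T C = T T*`. -/
def CNormal (C : H2 → H2) (T : H2 →L[ℂ] H2) : Prop :=
  ∀ x : H2, C ((ContinuousLinearMap.adjoint T) (T (C x)))
      = T ((ContinuousLinearMap.adjoint T) x)

/-- `T` is a normal operator: `T* T = T T*`. -/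
def IsNormalOp (T : H2 →L[ℂ] H2) : Prop :=
  (ContinuousLinearMap.adjoint T).comp T = T.comp (ContinuousLinearMap.adjoint T)

/-- `T` is a unitary operator. -/
def IsUnitaryOp (T : H2 →L[ℂ] H2) : Prop :=
  T.comp (ContinuousLinearMap.adjoint T) = ContinuousLinearMap.id ℂ H2 ∧
  (ContinuousLinearMap.adjoint T).comp T = ContinuousLinearMap.id ℂ H2

/-- `C` is the conjugation `J_μ` on `H²`: `(J_μ f)(z) = conj (f (μ * conj z))`. -/
def IsJmu (μ : ℂ) (C : H2 → H2) : Prop :=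
  ∀ f : H2, ∀ z : ℂ, ‖z‖ < 1 → eval (C f) z = conj (eval f (μ * conj z))

/-- `ξ_p(z) = √(1-|p|²) / (1 - conj p * z)`. -/
def xi (p z : ℂ) : ℂ := (Real.sqrt (1 - ‖p‖ ^ 2) : ℂ) / (1 - conj p * z)

/-- `τ_p(z) = λ (p - z) / (1 - conj p * z)`. -/
def tau (p lam z : ℂ) : ℂ := lam * (p - z) / (1 - conj p * z)

/-- `C` is the conjugation `J W_{ξ_p, τ_p}` on `H²`:
`(C f)(z) = conj (ξ_p(conj z) * f (τ_p (conj z)))`. -/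
def IsJW (p lam : ℂ) (C : H2 → H2) : Prop :=
  ∀ f : H2, ∀ z : ℂ, ‖z‖ < 1 →
    eval (C f) z = conj (xi p (conj z) * eval f (tau p lam (conj z)))

end H2


namespace H2

lemma one_sub_ne {a u : ℂ} (ha : ‖a‖ < 1) (hu : ‖u‖ < 1) : 1 - a * u ≠ 0 := by
  intro h
  have h1 : ‖a * u‖ < 1 := by
    rw [norm_mul]
    nlinarith [norm_nonneg a, norm_nonneg u]
  rw [sub_eq_zero] at h
  rw [← h] at h1
  simp at h1

lemma kernel_apply {w : ℂ} (hw : ‖w‖ < 1) (n : ℕ) :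
    (kernel w : ∀ _ : ℕ, ℂ) n = (conj w) ^ n := by
  rw [kernel, dif_pos hw]

lemma eval_kernel {w z : ℂ} (hw : ‖w‖ < 1) (hz : ‖z‖ < 1) :
    eval (kernel w) z = (1 - conj w * z)⁻¹ := by
  have h1 : ‖conj w * z‖ < 1 := by
    rw [norm_mul, RCLike.norm_conj]
    nlinarith [norm_nonneg w, norm_nonneg z]
  rw [eval, ← tsum_geometric_of_norm_lt_one h1]
  exact tsum_congr fun n => by rw [kernel_apply hw, mul_pow]

lemma eval_eq_inner (f : H2) {z : ℂ} (hz : ‖z‖ < 1) : eval f z = ⟪kernel z, f⟫_ℂ := by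
  rw [lp.inner_eq_tsum, eval]
  exact tsum_congr fun n => by
    rw [kernel_apply hz, RCLike.inner_apply, map_pow, RCLike.conj_conj, mul_comm]

lemma eval_smul (c : ℂ) (f : H2) (z : ℂ) : eval (c • f) z = c * eval f z := by
  rw [eval, eval, ← tsum_mul_left]
  exact tsum_congr fun n => by rw [lp.coeFn_smul, Pi.smul_apply, smul_eq_mul, mul_assoc]

lemma eq_zero_of_eval (f : H2) (h : ∀ z : ℂ, ‖z‖ < 1 → eval f z = 0) : f = 0 := by
  set c : ℕ → ℂ := fun n => (f : ∀ _ : ℕ, ℂ) n with hcdef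
  set P : FormalMultilinearSeries ℂ ℂ ℂ := FormalMultilinearSeries.ofScalars ℂ c with hP
  have hrad : (0 : ℝ≥0∞) < P.radius := by
    refine lt_of_lt_of_le (by norm_num : (0:ℝ≥0∞) < (1:ℝ≥0)) ?_
    refine P.le_radius_of_bound ‖f‖ fun n => ?_
    rw [hP, FormalMultilinearSeries.ofScalars_norm]
    simpa using lp.norm_apply_le_norm (by norm_num) f n
  have hsum : HasFPowerSeriesAt P.sum P 0 :=
    (P.hasFPowerSeriesOnBall hrad).hasFPowerSeriesAt
  have hPsum : ∀ z : ℂ, P.sum z = eval f z := fun z =>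
    tsum_congr fun n => by
      rw [hP, FormalMultilinearSeries.ofScalars_apply_eq, smul_eq_mul]
  have heq : P.sum =ᶠ[nhds (0:ℂ)] 0 := by
    filter_upwards [Metric.ball_mem_nhds (0:ℂ) one_pos] with z hzb
    rw [hPsum z, h z (by simpa [Metric.mem_ball, dist_eq_norm] using hzb)]; rfl
  have hP0 : P = 0 := (hsum.congr heq).eq_zero
  refine lp.ext (funext fun n => ?_)
  have : P n = 0 := by rw [hP0]; rfl
  rw [hP] at this
  have := (FormalMultilinearSeries.ofScalars_eq_zero ℂ n).mp this
  simpa using this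

lemma ext_of_eval {f g : H2} (h : ∀ z : ℂ, ‖z‖ < 1 → eval f z = eval g z) : f = g := by
  rw [← sub_eq_zero]
  refine eq_zero_of_eval _ fun z hz => ?_
  rw [eval_eq_inner _ hz, inner_sub_right, ← eval_eq_inner _ hz, ← eval_eq_inner _ hz,
    h z hz, sub_self]

lemma normSq_identity (p z : ℂ) :
    ((Complex.normSq (1 - conj p * z) : ℝ) : ℂ) - ((Complex.normSq (p - z) : ℝ) : ℂ)
      = (1 - (Complex.normSq p : ℝ)) * (1 - (Complex.normSq z : ℝ)) := by
  rw [← Complex.mul_conj, ← Complex.mul_conj, ← Complex.mul_conj, ← Complex.mul_conj]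
  simp only [map_sub, map_mul, map_one, Complex.conj_conj]
  ring

lemma tau_lt {p lam z : ℂ} (hp : ‖p‖ < 1) (hlam : ‖lam‖ = 1) (hz : ‖z‖ < 1) :
    ‖tau p lam z‖ < 1 := by
  have hd : (1 : ℂ) - conj p * z ≠ 0 := by
    have : ‖conj p‖ < 1 := by rwa [RCLike.norm_conj]
    exact one_sub_ne this hz
  have hkey : Complex.normSq (1 - conj p * z) - Complex.normSq (p - z)
      = (1 - Complex.normSq p) * (1 - Complex.normSq z) := by
    have := normSq_identity p z
    exact_mod_cast this
  have hsq : ∀ x : ℂ, Complex.normSq x = ‖x‖ ^ 2 := fun x => by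
    rw [Complex.normSq_eq_norm_sq]
  have hlt : ‖p - z‖ < ‖1 - conj p * z‖ := by
    have h1 : (1 - Complex.normSq p) * (1 - Complex.normSq z) > 0 := by
      rw [hsq, hsq]
      have h2 : ‖p‖ ^ 2 < 1 := by nlinarith [norm_nonneg p]
      have h3 : ‖z‖ ^ 2 < 1 := by nlinarith [norm_nonneg z]
      have := mul_pos (by linarith : (0:ℝ) < 1 - ‖p‖ ^ 2) (by linarith : (0:ℝ) < 1 - ‖z‖ ^ 2)
      linarith
    nlinarith [hkey, hsq (p - z), hsq (1 - conj p * z), norm_nonneg (p - z),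
      norm_nonneg (1 - conj p * z)]
  rw [tau, norm_div, norm_mul, hlam, one_mul, div_lt_one]
  · exact hlt
  · exact lt_of_le_of_lt (norm_nonneg _) hlt

end H2

set_option maxHeartbeats 1600000

/-- With `φ(z) = a₀ + a₁ z/(1 - conj a₀ * z)` and `ψ(z) = a₂/(1 - conj a₀ * z)`
(`a₀ ∈ 𝔻`, `a₁, a₂ ∈ ℝ`), `W_{ψ,φ}` is `J W_{ξ_p,τ_p}`-normal and Hermitian iff
`((a₁ - |a₀|²)² - 1)|p|² = -2 (a₁ - |a₀|² + 1) Re(a₀ p)`. -/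
theorem stmt11 (a₀ : ℂ) (a₁ a₂ : ℝ) (ha₀ : ‖a₀‖ < 1) (ha₂ : a₂ ≠ 0)
    (p lam : ℂ) (hp : ‖p‖ < 1) (hp0 : p ≠ 0) (hlam : ‖lam‖ = 1) (hlp : lam * p = conj p)
    (φ : ℂ → ℂ) (hφ : ∀ z : ℂ, φ z = a₀ + (a₁ : ℂ) * z / (1 - conj a₀ * z))
    (hself : ∀ z : ℂ, ‖z‖ < 1 → ‖φ z‖ < 1)
    (ψ : ℂ → ℂ) (hψ : ∀ z : ℂ, ψ z = (a₂ : ℂ) / (1 - conj a₀ * z))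
    (W : H2 →L[ℂ] H2) (hW : H2.IsWCompOp ψ φ W)
    (C : H2 → H2) (hC : H2.IsConjugation C) (hCJ : H2.IsJW p lam C) :
    (H2.CNormal C W ∧ ContinuousLinearMap.adjoint W = W) ↔
      ((a₁ - ‖a₀‖ ^ 2) ^ 2 - 1) * ‖p‖ ^ 2
        = -2 * (a₁ - ‖a₀‖ ^ 2 + 1) * (a₀ * p).re := by
  classical
  set b : ℂ := conj a₀ with hb_def
  have hb : ‖b‖ < 1 := by rwa [hb_def, RCLike.norm_conj]
  set T : ℂ := ((a₁ - ‖a₀‖ ^ 2 : ℝ) : ℂ) with hT_def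
  have hab : a₀ * b = ((‖a₀‖ ^ 2 : ℝ) : ℂ) := by
    rw [hb_def, Complex.mul_conj]
    norm_cast
    rw [Complex.normSq_eq_norm_sq]
  have hA : (a₁ : ℂ) = T + a₀ * b := by
    rw [hT_def, hab]; push_cast; ring
  have hconjT : conj T = T := Complex.conj_ofReal _
  have hconjb : conj b = a₀ := by rw [hb_def, Complex.conj_conj]
  have hcm : ∀ z : ℂ, ‖z‖ < 1 → ‖conj z‖ < 1 := fun z hz => by rwa [RCLike.norm_conj]
  have hτm : ∀ z : ℂ, ‖z‖ < 1 → ‖H2.tau p lam z‖ < 1 := fun z hz => H2.tau_lt hp hlam hz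
  have hden : ∀ z : ℂ, ‖z‖ < 1 → (1 : ℂ) - b * z ≠ 0 := fun z hz => H2.one_sub_ne hb hz
  have hdenp : ∀ z : ℂ, ‖z‖ < 1 → (1 : ℂ) - p * z ≠ 0 := fun z hz => H2.one_sub_ne hp hz
  have hdenq : ∀ z : ℂ, ‖z‖ < 1 → (1 : ℂ) - conj p * z ≠ 0 := fun z hz =>
    H2.one_sub_ne (by rwa [RCLike.norm_conj]) hz
  have hML : lam * conj lam = 1 := by
    rw [Complex.mul_conj]
    have h1 : Complex.normSq lam = 1 := by
      rw [Complex.normSq_eq_norm_sq, hlam, one_pow]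
    rw [h1]; norm_num
  have hMq : conj lam * conj p = p := by
    have := congrArg conj hlp
    simpa [map_mul] using this
  have hphi_frac : ∀ z : ℂ, ‖z‖ < 1 → φ z = (a₀ + T * z) / (1 - b * z) := by
    intro z hz
    rw [hφ z]
    have hzb : (1:ℂ) - z * b ≠ 0 := by rw [mul_comm]; exact hden z hz
    field_simp [hden z hz]
    linear_combination z * hA
  have hD2 : ∀ z : ℂ, ‖z‖ < 1 →
      1 - a₀ * b - b * (T + 1) * z = (1 - b * z) * (1 - b * φ z) := by
    intro z hz
    rw [hphi_frac z hz]
    field_simp [hden z hz]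
    ring
  have hD2ne : ∀ z : ℂ, ‖z‖ < 1 → 1 - a₀ * b - b * (T + 1) * z ≠ 0 := fun z hz => by
    rw [hD2 z hz]; exact mul_ne_zero (hden z hz) (hden _ (hself z hz))
  have hphi2 : ∀ z : ℂ, ‖z‖ < 1 →
      φ (φ z) = ((T ^ 2 - a₀ * b) * z + a₀ * (T + 1)) / (1 - a₀ * b - b * (T + 1) * z) := by
    intro z hz
    rw [hphi_frac (φ z) (hself z hz)]
    rw [div_eq_div_iff (hden _ (hself z hz)) (hD2ne z hz), hphi_frac z hz]
    have hzb : (1:ℂ) - z * b ≠ 0 := by rw [mul_comm]; exact hden z hz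
    field_simp [hden z hz]
    ring
  -- Hermitian part
  have hWk : ∀ w : ℂ, ‖w‖ < 1 → W (H2.kernel w) = conj (ψ w) • H2.kernel (φ w) := by
    intro w hw
    apply H2.ext_of_eval; intro z hz
    rw [hW (H2.kernel w) z hz, H2.eval_smul, H2.eval_kernel hw (hself z hz),
      H2.eval_kernel (hself w hw) hz]
    have h1 : (1 : ℂ) - conj w * φ z ≠ 0 := H2.one_sub_ne (hcm w hw) (hself z hz)
    have h2 : (1 : ℂ) - conj (φ w) * z ≠ 0 := H2.one_sub_ne (hcm (φ w) (hself w hw)) hz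
    rw [hψ z, hψ w]
    rw [hphi_frac z hz] at h1 ⊢
    rw [hphi_frac w hw] at h2 ⊢
    have hcw : conj ((a₀ + T * w) / (1 - b * w)) = (b + T * conj w) / (1 - a₀ * conj w) := by
      rw [map_div₀]
      simp only [map_add, map_sub, map_mul, map_one, hconjT, hconjb, hb_def, Complex.conj_conj]
    rw [hcw] at h2 ⊢
    have h3 : (1 : ℂ) - a₀ * conj w ≠ 0 := H2.one_sub_ne ha₀ (hcm w hw)
    have hca2 : conj ((a₂ : ℂ) / (1 - b * w)) = (a₂ : ℂ) / (1 - a₀ * conj w) := by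
      rw [map_div₀]
      simp only [map_sub, map_mul, map_one, hconjb, hb_def, Complex.conj_ofReal, Complex.conj_conj]
    rw [hca2]
    have e1 : 1 - conj w * ((a₀ + T * z) / (1 - b * z))
        = ((1 - b * z) - conj w * (a₀ + T * z)) / (1 - b * z) := by
      have hzb : (1:ℂ) - z * b ≠ 0 := by rw [mul_comm]; exact hden z hz
      field_simp [hden z hz]
    have e2 : 1 - (b + T * conj w) / (1 - a₀ * conj w) * z
        = ((1 - a₀ * conj w) - (b + T * conj w) * z) / (1 - a₀ * conj w) := by
      have h3' : (1:ℂ) - conj w * a₀ ≠ 0 := by rw [mul_comm]; exact h3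
      field_simp [h3]
    rw [e1] at h1 ⊢
    rw [e2] at h2 ⊢
    have hn1 : (1 - b * z) - conj w * (a₀ + T * z) ≠ 0 := by
      intro h; apply h1; rw [h, zero_div]
    have hn2 : (1 - a₀ * conj w) - (b + T * conj w) * z ≠ 0 := by
      intro h; apply h2; rw [h, zero_div]
    rw [inv_div, inv_div]
    rw [div_mul_div_comm, div_mul_div_comm]
    rw [div_eq_div_iff (by exact mul_ne_zero (hden z hz) hn1)
      (by exact mul_ne_zero (H2.one_sub_ne ha₀ (hcm w hw)) hn2)]
    ring
  -- the operator is Hermitian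
  have hadj : ContinuousLinearMap.adjoint W = W := by
    refine ContinuousLinearMap.ext fun f => ?_
    apply H2.ext_of_eval; intro z hz
    rw [H2.eval_eq_inner _ hz, ContinuousLinearMap.adjoint_inner_right, hWk z hz,
      inner_smul_left, Complex.conj_conj, ← H2.eval_eq_inner f (hself z hz), ← hW f z hz]
  -- reduction of C-normality
  have hCN : H2.CNormal C W ↔ ∀ x : H2, W (W (C x)) = C (W (W x)) := by
    constructor
    · intro h x
      have h1 := h x
      rw [hadj] at h1
      calc W (W (C x)) = C (C (W (W (C x)))) := (hC.invol _).symm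
        _ = C (W (W x)) := by rw [h1]
    · intro h x
      show C ((ContinuousLinearMap.adjoint W) (W (C x))) = W ((ContinuousLinearMap.adjoint W) x)
      rw [hadj, h x, hC.invol]
  -- scalar form lemmas
  set s : ℂ := ((Real.sqrt (1 - ‖p‖ ^ 2) : ℝ) : ℂ) with hs_def
  have hs0 : s ≠ 0 := by
    rw [hs_def]
    have h1 : (0:ℝ) < 1 - ‖p‖ ^ 2 := by nlinarith [norm_nonneg p]
    exact_mod_cast ne_of_gt (Real.sqrt_pos.mpr h1)
  have ha₂' : (a₂ : ℂ) ≠ 0 := by exact_mod_cast ha₂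
  have hxiconj : ∀ X : ℂ, conj (H2.xi p (conj X)) = s / (1 - p * X) := by
    intro X
    rw [H2.xi, map_div₀]
    simp only [map_sub, map_mul, map_one, Complex.conj_conj, Complex.conj_ofReal, hs_def]
  have hψφ : ∀ z : ℂ, ‖z‖ < 1 →
      ψ z * ψ (φ z) = (a₂ : ℂ) ^ 2 / (1 - a₀ * b - b * (T + 1) * z) := by
    intro z hz
    rw [hψ z, hψ (φ z), div_mul_div_comm, hD2 z hz, sq]
  have hDlform : ∀ z : ℂ, ‖z‖ < 1 →
      1 - a₀ * b - b * (T + 1) * z - p * ((T ^ 2 - a₀ * b) * z + a₀ * (T + 1))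
        = (1 - a₀ * b - b * (T + 1) * z) * (1 - p * φ (φ z)) := by
    intro z hz
    rw [hphi2 z hz]
    field_simp [hD2ne z hz]
    try ring
  have hDlne : ∀ z : ℂ, ‖z‖ < 1 →
      1 - a₀ * b - b * (T + 1) * z - p * ((T ^ 2 - a₀ * b) * z + a₀ * (T + 1)) ≠ 0 := by
    intro z hz
    rw [hDlform z hz]
    exact mul_ne_zero (hD2ne z hz) (hdenp _ (hself _ (hself z hz)))
  have hXl : ∀ z : ℂ, ‖z‖ < 1 →
      ψ z * (ψ (φ z) * conj (H2.xi p (conj (φ (φ z)))))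
        = (a₂ : ℂ) ^ 2 * s
          / (1 - a₀ * b - b * (T + 1) * z - p * ((T ^ 2 - a₀ * b) * z + a₀ * (T + 1))) := by
    intro z hz
    rw [← mul_assoc, hψφ z hz, hxiconj (φ (φ z)), div_mul_div_comm, hDlform z hz]
  have hτ_eq : ∀ u : ℂ, H2.tau p lam u = lam * (p - u) / (1 - conj p * u) := fun u => rfl
  have hcDrne : ∀ z : ℂ, ‖z‖ < 1 →
      (1 - a₀ * b) * (1 - conj p * conj z) - b * (T + 1) * (lam * (p - conj z)) ≠ 0 := by
    intro z hz
    have hYm : ‖H2.tau p lam (conj z)‖ < 1 := hτm _ (hcm z hz)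
    have e : (1 - a₀ * b) * (1 - conj p * conj z) - b * (T + 1) * (lam * (p - conj z))
        = (1 - conj p * conj z) * (1 - a₀ * b - b * (T + 1) * H2.tau p lam (conj z)) := by
      rw [hτ_eq]
      field_simp [hdenq _ (hcm z hz)]
    rw [e]
    exact mul_ne_zero (hdenq _ (hcm z hz)) (hD2ne _ hYm)
  have hXr' : ∀ z : ℂ, ‖z‖ < 1 →
      H2.xi p (conj z) * (ψ (H2.tau p lam (conj z)) * ψ (φ (H2.tau p lam (conj z))))
        = (a₂ : ℂ) ^ 2 * s
          / ((1 - a₀ * b) * (1 - conj p * conj z) - b * (T + 1) * (lam * (p - conj z))) := by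
    intro z hz
    have hYm : ‖H2.tau p lam (conj z)‖ < 1 := hτm _ (hcm z hz)
    rw [hψφ _ hYm, H2.xi]
    have e : (1:ℂ) - a₀ * b - b * (T + 1) * H2.tau p lam (conj z)
        = ((1 - a₀ * b) * (1 - conj p * conj z) - b * (T + 1) * (lam * (p - conj z)))
          / (1 - conj p * conj z) := by
      rw [hτ_eq]
      have hzq : (1:ℂ) - conj z * conj p ≠ 0 := by rw [mul_comm]; exact hdenq _ (hcm z hz)
      field_simp [hdenq _ (hcm z hz)]
    rw [e]
    rw [div_div_eq_mul_div, div_mul_div_comm]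
    rw [div_eq_div_iff (by exact mul_ne_zero (hdenq _ (hcm z hz)) (hcDrne z hz))
      (hcDrne z hz)]
    rw [hs_def]
    ring
  -- conjugate of the RHS denominator
  have hDrconj : ∀ z : ℂ,
      conj ((1 - a₀ * b) * (1 - p * z) - a₀ * conj lam * (T + 1) * (conj p - z))
        = (1 - a₀ * b) * (1 - conj p * conj z) - b * (T + 1) * (lam * (p - conj z)) := by
    intro z
    simp only [map_add, map_sub, map_mul, map_one, Complex.conj_conj, hconjT, hconjb, ← hb_def]
    ring
  have hDrne : ∀ z : ℂ, ‖z‖ < 1 →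
      (1 - a₀ * b) * (1 - p * z) - a₀ * conj lam * (T + 1) * (conj p - z) ≠ 0 := by
    intro z hz hcontr
    apply hcDrne z hz
    rw [← hDrconj z, hcontr, map_zero]
  have hfrac_conj : ∀ z : ℂ, ‖z‖ < 1 →
      conj ((a₂ : ℂ) ^ 2 * s
          / ((1 - a₀ * b) * (1 - conj p * conj z) - b * (T + 1) * (lam * (p - conj z))))
        = (a₂ : ℂ) ^ 2 * s
          / ((1 - a₀ * b) * (1 - p * z) - a₀ * conj lam * (T + 1) * (conj p - z)) := by
    intro z hz
    rw [map_div₀, ← hDrconj z, Complex.conj_conj]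
    congr 1
    rw [hs_def, map_mul, map_pow, Complex.conj_ofReal, Complex.conj_ofReal]
  -- cast bridges
  have hpq : p * conj p = ((‖p‖ ^ 2 : ℝ) : ℂ) := by
    rw [Complex.mul_conj]; norm_cast
    rw [Complex.normSq_eq_norm_sq]
  have hre2 : a₀ * p + b * conj p = ((2 * (a₀ * p).re : ℝ) : ℂ) := by
    rw [hb_def, ← map_mul, Complex.add_conj]
  -- main forward extraction
  have hkey : (∀ x : H2, W (W (C x)) = C (W (W x))) → ∀ z : ℂ, ‖z‖ < 1 →
      1 - a₀ * b - b * (T + 1) * z - p * ((T ^ 2 - a₀ * b) * z + a₀ * (T + 1))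
        = (1 - a₀ * b) * (1 - p * z) - a₀ * conj lam * (T + 1) * (conj p - z) := by
    intro hstar z hz
    have h0m : ‖(0:ℂ)‖ < 1 := by simp
    have hzc := hcm z hz
    have hφz := hself z hz
    have hφφz := hself _ hφz
    have hφφzc := hcm _ hφφz
    have hYm := hτm _ hzc
    have hτv := hτm _ hφφzc
    have he := congrArg (fun g : H2 => H2.eval g z) (hstar (H2.kernel 0))
    rw [hW _ z hz, hW _ (φ z) hφz, hCJ _ (φ (φ z)) hφφz,
        hCJ _ z hz, hW _ _ hYm, hW _ _ (hself _ hYm)] at he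
    rw [H2.eval_kernel h0m hτv, H2.eval_kernel h0m (hself _ (hself _ hYm))] at he
    simp only [map_zero, zero_mul, sub_zero, inv_one, mul_one] at he
    rw [hXl z hz, hXr' z hz, hfrac_conj z hz] at he
    rw [div_eq_div_iff (hDlne z hz) (hDrne z hz)] at he
    have hnum : (a₂ : ℂ) ^ 2 * s ≠ 0 := mul_ne_zero (pow_ne_zero 2 ha₂') hs0
    exact (mul_left_cancel₀ hnum he).symm
  constructor
  · rintro ⟨hcn, _⟩
    have hDleq := hkey (hCN.mp hcn)
    have h0 := hDleq 0 (by simp)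
    have hhalf_norm : ‖(1/2 : ℂ)‖ < 1 := by
      have e : ((1/2 : ℂ)) = ((1/2 : ℝ) : ℂ) := by norm_num
      rw [e, Complex.norm_real, Real.norm_eq_abs]
      rw [abs_of_pos (by norm_num : (0:ℝ) < 1/2)]
      norm_num
    have hhf := hDleq (1/2 : ℂ) hhalf_norm
    have hD : (T ^ 2 - 1) * (p * conj p) + (T + 1) * (a₀ * p + b * conj p) = 0 := by
      linear_combination (2 * conj p - 1) * h0 - 2 * (conj p) * hhf
    rw [hpq, hre2, hT_def] at hD
    have hreal : ((a₁ - ‖a₀‖ ^ 2) ^ 2 - 1) * (‖p‖ ^ 2)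
        + (a₁ - ‖a₀‖ ^ 2 + 1) * (2 * (a₀ * p).re) = 0 := by exact_mod_cast hD
    linear_combination hreal
  · intro hcond
    refine ⟨hCN.mpr ?_, hadj⟩
    have hreal : ((a₁ - ‖a₀‖ ^ 2) ^ 2 - 1) * (‖p‖ ^ 2)
        + (a₁ - ‖a₀‖ ^ 2 + 1) * (2 * (a₀ * p).re) = 0 := by linear_combination hcond
    have hDc : (T ^ 2 - 1) * (p * conj p) + (T + 1) * (a₀ * p + b * conj p) = 0 := by
      rw [hpq, hre2, hT_def]; exact_mod_cast hreal
    have hE' : (T ^ 2 - 1) * (lam * p) + (T + 1) * (a₀ + lam * b) = 0 := by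
      apply mul_left_cancel₀ hp0
      rw [mul_zero]
      linear_combination hDc + ((T ^ 2 - 1) * p + (T + 1) * b) * hlp
    have hq0 : conj p ≠ 0 := fun h => hp0 (by simpa using congrArg conj h)
    have hEb : (T ^ 2 - 1) * p + (T + 1) * (b + conj lam * a₀) = 0 := by
      apply mul_left_cancel₀ hq0
      rw [mul_zero]
      linear_combination hDc + ((T + 1) * a₀) * hMq
    have hIId : ∀ z : ℂ, ‖z‖ < 1 →
        1 - a₀ * b - b * (T + 1) * z - p * ((T ^ 2 - a₀ * b) * z + a₀ * (T + 1))
          = (1 - a₀ * b) * (1 - p * z) - a₀ * conj lam * (T + 1) * (conj p - z) := by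
      intro z hz
      linear_combination (-p) * hE' + (lam * p - z) * hEb - (a₀ * (1 + T) * conj lam) * hlp
    -- identity (I)
    have hconjφ2 : ∀ z : ℂ, ‖z‖ < 1 → conj (φ (φ z))
        = ((T ^ 2 - a₀ * b) * conj z + b * (T + 1))
          / (1 - a₀ * b - a₀ * (T + 1) * conj z) := by
      intro z hz
      rw [hphi2 z hz, map_div₀]
      simp only [map_add, map_sub, map_mul, map_one, map_pow, hconjT, hconjb, ← hb_def]
      ring
    have hDvcne : ∀ z : ℂ, ‖z‖ < 1 → 1 - a₀ * b - a₀ * (T + 1) * conj z ≠ 0 := by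
      intro z hz hcontr
      apply hD2ne z hz
      have e : conj (1 - a₀ * b - a₀ * (T + 1) * conj z) = 1 - a₀ * b - b * (T + 1) * z := by
        simp only [map_add, map_sub, map_mul, map_one, hconjT, hconjb, ← hb_def, Complex.conj_conj]
        ring
      rw [← e, hcontr, map_zero]
    have hDvcq : ∀ z : ℂ, ‖z‖ < 1 →
        1 - a₀ * b - a₀ * (T + 1) * conj z
          - conj p * ((T ^ 2 - a₀ * b) * conj z + b * (T + 1)) ≠ 0 := by
      intro z hz hcontr
      apply hDlne z hz
      have e : conj (1 - a₀ * b - a₀ * (T + 1) * conj z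
            - conj p * ((T ^ 2 - a₀ * b) * conj z + b * (T + 1)))
          = 1 - a₀ * b - b * (T + 1) * z - p * ((T ^ 2 - a₀ * b) * z + a₀ * (T + 1)) := by
        simp only [map_sub, map_add, map_mul, map_one, map_pow, hconjT, hconjb, ← hb_def,
          Complex.conj_conj]
        ring
      rw [← e, hcontr, map_zero]
    have hLv : ∀ z : ℂ, ‖z‖ < 1 → H2.tau p lam (conj (φ (φ z)))
        = lam * (p * (1 - a₀ * b - a₀ * (T + 1) * conj z)
            - ((T ^ 2 - a₀ * b) * conj z + b * (T + 1)))
          / (1 - a₀ * b - a₀ * (T + 1) * conj z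
            - conj p * ((T ^ 2 - a₀ * b) * conj z + b * (T + 1))) := by
      intro z hz
      have hzv : (1:ℂ) - a₀ * b - a₀ * conj z * (T + 1) ≠ 0 := by
        rw [mul_assoc, mul_comm (conj z), ← mul_assoc]; exact hDvcne z hz
      rw [hτ_eq, hconjφ2 z hz]
      have e1 : (1:ℂ) - conj p * (((T ^ 2 - a₀ * b) * conj z + b * (T + 1))
            / (1 - a₀ * b - a₀ * (T + 1) * conj z))
          = (1 - a₀ * b - a₀ * (T + 1) * conj z
              - conj p * ((T ^ 2 - a₀ * b) * conj z + b * (T + 1)))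
            / (1 - a₀ * b - a₀ * (T + 1) * conj z) := by
        field_simp [hDvcne z hz]
      rw [e1]
      have dB : (1 - a₀ * b - a₀ * (T + 1) * conj z
            - conj p * ((T ^ 2 - a₀ * b) * conj z + b * (T + 1)))
            / (1 - a₀ * b - a₀ * (T + 1) * conj z) ≠ 0 :=
        div_ne_zero (hDvcq z hz) (hDvcne z hz)
      rw [div_eq_div_iff dB (hDvcq z hz)]
      field_simp [hDvcne z hz]
    have hRv : ∀ z : ℂ, ‖z‖ < 1 → φ (φ (H2.tau p lam (conj z)))
        = ((T ^ 2 - a₀ * b) * (lam * (p - conj z)) + a₀ * (T + 1) * (1 - conj p * conj z))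
          / ((1 - a₀ * b) * (1 - conj p * conj z) - b * (T + 1) * (lam * (p - conj z))) := by
      intro z hz
      have hYm := hτm _ (hcm z hz)
      have hzq : (1:ℂ) - conj z * conj p ≠ 0 := by rw [mul_comm]; exact hdenq _ (hcm z hz)
      rw [hphi2 _ hYm, hτ_eq]
      have e2 : (1:ℂ) - a₀ * b - b * (T + 1) * (lam * (p - conj z) / (1 - conj p * conj z))
          = ((1 - a₀ * b) * (1 - conj p * conj z) - b * (T + 1) * (lam * (p - conj z)))
            / (1 - conj p * conj z) := by
        field_simp [hdenq _ (hcm z hz)]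
      rw [e2]
      have dB2 : ((1 - a₀ * b) * (1 - conj p * conj z) - b * (T + 1) * (lam * (p - conj z)))
            / (1 - conj p * conj z) ≠ 0 :=
        div_ne_zero (hcDrne z hz) (hdenq _ (hcm z hz))
      rw [div_eq_div_iff dB2 (hcDrne z hz)]
      field_simp [hdenq _ (hcm z hz)]
    have hq' : conj p = lam * p := hlp.symm
    have hI : ∀ z : ℂ, ‖z‖ < 1 →
        H2.tau p lam (conj (φ (φ z))) = φ (φ (H2.tau p lam (conj z))) := by
      intro z hz
      rw [hLv z hz, hRv z hz, div_eq_div_iff (hDvcq z hz) (hcDrne z hz)]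
      linear_combination (-1 + p*lam*(conj z) + (-1)*T^2*lam*(conj z)^2 + T^2*p*lam*(conj z) + (-1)*b*lam*(conj z) + b*p*lam + (-1)*b*T*lam*(conj z) + b*T*p*lam + a₀*(conj z) + (-1)*a₀*p*lam*(conj z)^2 + a₀*T*(conj z) + (-1)*a₀*T*p*lam*(conj z)^2 + a₀*b + a₀*b*lam*(conj z)^2 + -2*a₀*b*p*lam*(conj z)) * hE' + ((-1)*p*lam*(conj z) + T^2*lam*(conj z)^2 + (-1)*T^4*lam*(conj z)^2 + T^4*p*lam*(conj z) + b*lam*(conj z) + b*T*lam*(conj z) + (-1)*b*T^2*lam*(conj z) + b*T^2*p*lam + (-1)*b*T^3*lam*(conj z) + b*T^3*p*lam + a₀*(conj z) + a₀*p*lam*(conj z)^2 + a₀*T*(conj z) + a₀*T*p*lam*(conj z)^2 + a₀*T^2*(conj z) + (-1)*a₀*T^2*(conj p)*(conj z)^2 + (-1)*a₀*T^2*p*lam*(conj z)^2 + a₀*T^3*(conj z) + (-1)*a₀*T^3*(conj p)*(conj z)^2 + (-1)*a₀*T^3*p*lam*(conj z)^2 + a₀*b + (-1)*a₀*b*lam*(conj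 z)^2 + (-1)*a₀*b*(conj p)*(conj z) + a₀*b*p*lam*(conj z) + 2*a₀*b*T + -2*a₀*b*T*(conj p)*(conj z) + -2*a₀*b*T*p*lam*(conj z) + a₀*b*T^2 + a₀*b*T^2*lam*(conj z)^2 + (-1)*a₀*b*T^2*(conj p)*(conj z) + -3*a₀*b*T^2*p*lam*(conj z) + (-1)*a₀*b^2*p*lam + (-1)*a₀*b^2*T*p*lam + (-1)*a₀^2*(conj z)^2 + -2*a₀^2*T*(conj z)^2 + (-1)*a₀^2*T^2*(conj z)^2 + -2*a₀^2*b*(conj z) + a₀^2*b*(conj p)*(conj z)^2 + -2*a₀^2*b*T*(conj z) + a₀^2*b*T*(conj p)*(conj z)^2) * hq'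
    -- conclude
    intro x
    apply H2.ext_of_eval; intro z hz
    have hzc := hcm z hz
    have hφz := hself z hz
    have hφφz := hself _ hφz
    have hYm := hτm _ hzc
    rw [hW _ z hz, hW _ (φ z) hφz, hCJ _ (φ (φ z)) hφφz,
        hCJ _ z hz, hW _ _ hYm, hW _ _ (hself _ hYm)]
    rw [← hI z hz]
    rw [show H2.xi p (conj z) * (ψ (H2.tau p lam (conj z)) * (ψ (φ (H2.tau p lam (conj z)))
          * H2.eval x (H2.tau p lam (conj (φ (φ z))))))
        = (H2.xi p (conj z) * (ψ (H2.tau p lam (conj z)) * ψ (φ (H2.tau p lam (conj z)))))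
          * H2.eval x (H2.tau p lam (conj (φ (φ z)))) from by ring]
    rw [hXr' z hz, map_mul, map_mul, hfrac_conj z hz]
    rw [show ψ z * (ψ (φ z) * (conj (H2.xi p (conj (φ (φ z))))
          * conj (H2.eval x (H2.tau p lam (conj (φ (φ z)))))))
        = (ψ z * (ψ (φ z) * conj (H2.xi p (conj (φ (φ z))))))
          * conj (H2.eval x (H2.tau p lam (conj (φ (φ z))))) from by ring]
    rw [hXl z hz, hIId z hz]
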